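/- Let n ≥ 7 and let κ be a content with Σ_i κ_i = n. Then there exists a bijection ι from 𝒴(κ; (1,2,1,2,3,3)) onto the disjoint union over all z ≥ 4 of the sets 𝒴_{(3,z)}(κ; β_z), where β_z is the word (1,2,3,1,2,…,z), such that r(ι(y)) = r(y) − 1 for every y. -/

import Mathlib

open scoped Classical

noncomputable section

/-- The list of lengths of the maximal strictly increasing runs of a word, in order
(the run type `τ_y`); its length is the number of runs `r(y)`. -/
def runLengths : List ℕ → List ℕ
  | [] => []
  | [_] => [1]
  | a :: b :: l =>
    if a < b then
      match runLengths (b :: l) with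
      | [] => [1]
      | c :: cs => (c + 1) :: cs
    else 1 :: runLengths (b :: l)

/-- `y` belongs to `𝒴(κ)`: the word `y` has content `κ` (the letter `i` occurs `κ i` times;
in particular all letters are positive when `κ 0 = 0`), is Yamanouchi (in every prefix, `i+1`
occurs at most as often as `i`, for every `i ≥ 1`), and every run of `y` except possibly the
last has length at least `2`. -/
def MemYam (κ : ℕ → ℕ) (y : List ℕ) : Prop :=
  (∀ i, y.count i = κ i) ∧
  (∀ m i, 1 ≤ i → ((y.take m).count (i + 1) : ℕ) ≤ (y.take m).count i) ∧
  (∀ l ∈ (runLengths y).dropLast, 2 ≤ l)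

/-- The set `𝒴_α(κ)` of words in `𝒴(κ)` whose run type has `α` as a prefix. -/
def yamRT (κ : ℕ → ℕ) (α : List ℕ) : Set (List ℕ) :=
  {y | MemYam κ y ∧ α <+: runLengths y}

/-- The set `𝒴(κ; β)` of words in `𝒴(κ)` having the word `β` as a prefix. -/
def yamPre (κ : ℕ → ℕ) (β : List ℕ) : Set (List ℕ) :=
  {y | MemYam κ y ∧ β <+: y}

lemma rl_ne_nil (a : ℕ) (l : List ℕ) : runLengths (a :: l) ≠ [] := by
  cases l with
  | nil => simp [runLengths]
  | cons b l =>
    rw [runLengths]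
    split
    · split <;> simp
    · simp

lemma rl_lt {a b : ℕ} (l : List ℕ) (h : a < b) {c : ℕ} {cs : List ℕ}
    (h2 : runLengths (b :: l) = c :: cs) :
    runLengths (a :: b :: l) = (c + 1) :: cs := by
  rw [runLengths, if_pos h, h2]

lemma rl_ge {a b : ℕ} (l : List ℕ) (h : ¬ a < b) :
    runLengths (a :: b :: l) = 1 :: runLengths (b :: l) := by
  rw [runLengths, if_neg h]

lemma rl_sum (l : List ℕ) : (runLengths l).sum = l.length := by
  induction l with
  | nil => simp [runLengths]
  | cons a l ih =>
    cases l with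
    | nil => simp [runLengths]
    | cons b l =>
      obtain ⟨c, cs, h⟩ : ∃ c cs, runLengths (b :: l) = c :: cs := by
        rcases h : runLengths (b :: l) with _ | ⟨c, cs⟩
        · exact absurd h (rl_ne_nil _ _)
        · exact ⟨c, cs, rfl⟩
      by_cases hab : a < b
      · rw [rl_lt l hab h]
        rw [h] at ih
        simp at ih ⊢
        omega
      · rw [rl_ge l hab]
        simp [ih]; omega

lemma rl_peel {a : ℕ} {l : List ℕ} {c : ℕ} {cs : List ℕ}
    (h : runLengths (a :: l) = (c + 2) :: cs) :
    ∃ b l', l = b :: l' ∧ a < b ∧ runLengths (b :: l') = (c + 1) :: cs := by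
  cases l with
  | nil => simp [runLengths] at h
  | cons b l =>
    by_cases hab : a < b
    · obtain ⟨c', cs', h2⟩ : ∃ c' cs', runLengths (b :: l) = c' :: cs' := by
        rcases h2 : runLengths (b :: l) with _ | ⟨c', cs'⟩
        · exact absurd h2 (rl_ne_nil _ _)
        · exact ⟨c', cs', rfl⟩
      rw [rl_lt l hab h2] at h
      injection h with h3 h4
      exact ⟨b, l, rfl, hab, by rw [h2]; congr 1 <;> omega⟩
    · rw [rl_ge l hab] at h
      simp at h


lemma rl_get (t : List ℕ) : ∃ c cs, runLengths (3 :: t) = c :: cs := by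
  rcases h : runLengths (3 :: t) with _ | ⟨c, cs⟩
  · exact absurd h (rl_ne_nil _ _)
  · exact ⟨c, cs, rfl⟩

lemma R1 {t : List ℕ} {c : ℕ} {cs : List ℕ} (h : runLengths (3 :: t) = c :: cs) :
    runLengths (1 :: 2 :: 1 :: 2 :: 3 :: 3 :: t) = 2 :: 3 :: c :: cs := by
  have e1 : runLengths (3 :: 3 :: t) = 1 :: c :: cs := by
    rw [rl_ge t (by omega), h]
  have e2 : runLengths (2 :: 3 :: 3 :: t) = 2 :: c :: cs := rl_lt _ (by omega) e1
  have e3 : runLengths (1 :: 2 :: 3 :: 3 :: t) = 3 :: c :: cs := rl_lt _ (by omega) e2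
  have e4 : runLengths (2 :: 1 :: 2 :: 3 :: 3 :: t) = 1 :: 3 :: c :: cs := by
    rw [rl_ge _ (by omega), e3]
  exact rl_lt _ (by omega) e4

lemma R2 {t : List ℕ} {c : ℕ} {cs : List ℕ} (h : runLengths (3 :: t) = c :: cs) :
    runLengths (1 :: 2 :: 3 :: 1 :: 2 :: 3 :: t) = 3 :: (c + 2) :: cs := by
  have e1 : runLengths (2 :: 3 :: t) = (c + 1) :: cs := rl_lt _ (by omega) h
  have e2 : runLengths (1 :: 2 :: 3 :: t) = (c + 2) :: cs := by
    have := rl_lt (3 :: t) (show (1:ℕ) < 2 by omega) e1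
    rw [this]
  have e3 : runLengths (3 :: 1 :: 2 :: 3 :: t) = 1 :: (c + 2) :: cs := by
    rw [rl_ge _ (by omega), e2]
  have e4 : runLengths (2 :: 3 :: 1 :: 2 :: 3 :: t) = 2 :: (c + 2) :: cs :=
    rl_lt _ (by omega) e3
  exact rl_lt _ (by omega) e4


lemma yam_take_eq (t : List ℕ) (m i : ℕ) (hm : 6 ≤ m) :
    ((([1,2,1,2,3,3] : List ℕ) ++ t).take m).count i
      = ((([1,2,3,1,2,3] : List ℕ) ++ t).take m).count i := by
  obtain ⟨k, rfl⟩ : ∃ k, m = 6 + k := ⟨m - 6, by omega⟩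
  rw [show (6:ℕ) + k = ([1,2,1,2,3,3] : List ℕ).length + k by simp, List.take_append,
    show ([1,2,1,2,3,3] : List ℕ).length = ([1,2,3,1,2,3] : List ℕ).length by simp,
    List.take_append]
  simp [List.count_append, List.count_cons]
  rw [List.take_of_length_le (by simp), List.take_of_length_le (by simp)]
  simp [List.count_cons]
  omega

lemma yam_transfer (t : List ℕ) :
    (∀ m i, 1 ≤ i → ((([1,2,1,2,3,3] : List ℕ) ++ t).take m).count (i+1)
        ≤ ((([1,2,1,2,3,3] : List ℕ) ++ t).take m).count i) ↔
    (∀ m i, 1 ≤ i → ((([1,2,3,1,2,3] : List ℕ) ++ t).take m).count (i+1)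
        ≤ ((([1,2,3,1,2,3] : List ℕ) ++ t).take m).count i) := by
  constructor <;> intro h m i hi
  · by_cases hm : 6 ≤ m
    · rw [← yam_take_eq t m _ hm, ← yam_take_eq t m _ hm]; exact h m i hi
    · have e : ((([1,2,3,1,2,3] : List ℕ) ++ t).take m) = ([1,2,3,1,2,3] : List ℕ).take m :=
        List.take_append_of_le_length (by simp; omega)
      rw [e]
      interval_cases m <;> simp [List.count_cons] <;> (try split_ifs) <;> omega
  · by_cases hm : 6 ≤ m
    · rw [yam_take_eq t m _ hm, yam_take_eq t m _ hm]; exact h m i hi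
    · have e : ((([1,2,1,2,3,3] : List ℕ) ++ t).take m) = ([1,2,1,2,3,3] : List ℕ).take m :=
        List.take_append_of_le_length (by simp; omega)
      rw [e]
      interval_cases m <;> simp [List.count_cons] <;> (try split_ifs) <;> omega


lemma count_map_range (n k x : ℕ) :
    ((List.range n).map (· + k)).count x = if k ≤ x ∧ x < n + k then 1 else 0 := by
  induction n with
  | zero =>
    simp only [List.range_zero, List.map_nil, List.count_nil]
    split_ifs <;> omega
  | succ n ih =>
    rw [List.range_succ]
    simp [List.count_append, ih, List.count_cons]
    split_ifs <;> omega

lemma key : ∀ c j t cs,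
    runLengths ((j + 3) :: t) = (c + 1) :: cs →
    (∀ m i, 1 ≤ i →
      ((([1,2,3,1,2] : List ℕ) ++ (List.range (j+1)).map (· + 3) ++ t).take m).count (i+1)
        ≤ ((([1,2,3,1,2] : List ℕ) ++ (List.range (j+1)).map (· + 3) ++ t).take m).count i) →
    t.take c = (List.range c).map (· + (j + 4)) := by
  intro c
  induction c with
  | zero => intro j t cs _ _; simp
  | succ c ih =>
    intro j t cs hrl hyam
    obtain ⟨b, t', rfl, hlt, hrl'⟩ := rl_peel hrl
    set M : List ℕ := (List.range (j+1)).map (· + 3) with hM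
    have hMlen : M.length = j + 1 := by simp [hM]
    -- prefix of length j+7
    have htake : ((([1,2,3,1,2] : List ℕ) ++ M ++ (b :: t'))).take (j + 7)
        = ([1,2,3,1,2] : List ℕ) ++ M ++ [b] := by
      rw [show j + 7 = (([1,2,3,1,2] : List ℕ) ++ M).length + 1 by simp [hMlen],
        List.take_append]
      simp
    have hb : b = j + 4 := by
      have h1 := hyam (j + 7) (b - 1) (by omega)
      rw [htake] at h1
      have hb1 : b - 1 + 1 = b := by omega
      rw [hb1] at h1
      simp [List.count_append, List.count_cons, hM, count_map_range] at h1
      split_ifs at h1 <;> omega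
    subst hb
    have hyam' : (∀ m i, 1 ≤ i →
        ((([1,2,3,1,2] : List ℕ) ++ (List.range (j+1+1)).map (· + 3) ++ t').take m).count (i+1)
          ≤ ((([1,2,3,1,2] : List ℕ) ++ (List.range (j+1+1)).map (· + 3) ++ t').take m).count i) := by
      have e : ([1,2,3,1,2] : List ℕ) ++ (List.range (j+1+1)).map (· + 3) ++ t'
          = ([1,2,3,1,2] : List ℕ) ++ M ++ ((j+4) :: t') := by
        rw [List.range_succ]
        simp [hM]
      rw [e]; exact hyam
    have := ih (j+1) t' cs (by rw [show j + 1 + 3 = j + 4 from rfl]; exact hrl') hyam'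
    rw [List.take_succ_cons, this, List.range_succ_eq_map]
    simp [List.map_map, Function.comp]
    intro a _
    omega


lemma length_eq (κ : ℕ →₀ ℕ) (y : List ℕ) (h : ∀ i, y.count i = κ i) :
    y.length = κ.sum (fun _ m => m) := by
  have h0 : κ.sum (fun _ m => m) = ∑ i ∈ κ.support, κ i := rfl
  have h1 : ∑ i ∈ κ.support, κ i = ∑ i ∈ κ.support ∪ y.toFinset, κ i := by
    apply Finset.sum_subset Finset.subset_union_left
    intro x _ hx
    exact Finsupp.notMem_support_iff.mp hx
  have h2 : ∑ i ∈ y.toFinset, y.count i = ∑ i ∈ κ.support ∪ y.toFinset, y.count i := by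
    apply Finset.sum_subset Finset.subset_union_right
    intro x _ hx
    exact List.count_eq_zero_of_not_mem (by simpa using hx)
  have h3 : ∑ i ∈ y.toFinset, y.count i = y.length := by
    have := Multiset.toFinset_sum_count_eq (y : Multiset ℕ)
    simpa using this
  rw [h0, h1, ← h3, h2]
  exact (Finset.sum_congr rfl (fun i _ => (h i).symm)).symm

lemma range_split (z : ℕ) (h : 3 ≤ z) :
    (List.range z).map (· + 1) = [1,2,3] ++ (List.range (z-3)).map (· + 4) := by
  obtain ⟨w, rfl⟩ : ∃ w, z = 3 + w := ⟨z - 3, by omega⟩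
  rw [Nat.add_sub_cancel_left, List.range_add, List.map_append, List.map_map]
  congr 1
  apply List.map_congr_left
  intro a _
  simp
  omega


lemma fwd (n : ℕ) (κ : ℕ →₀ ℕ) (hn : 7 ≤ n) (hκ : κ.sum (fun _ m => m) = n)
    (t : List ℕ) (h : MemYam κ ([1,2,1,2,3,3] ++ t)) :
    ∃ z, 4 ≤ z ∧ MemYam κ ([1,2,3,1,2,3] ++ t) ∧
      [3, z] <+: runLengths ([1,2,3,1,2,3] ++ t) ∧
      ([1,2,3] ++ (List.range z).map (· + 1)) <+: ([1,2,3,1,2,3] ++ t) := by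
  obtain ⟨hcount, hyam, hrun⟩ := h
  obtain ⟨c, cs, hrl3⟩ := rl_get t
  have hR1 : runLengths ([1,2,1,2,3,3] ++ t) = 2 :: 3 :: c :: cs := R1 hrl3
  have hR2 : runLengths ([1,2,3,1,2,3] ++ t) = 3 :: (c+2) :: cs := R2 hrl3
  have hperm : ([1,2,1,2,3,3] ++ t : List ℕ).Perm ([1,2,3,1,2,3] ++ t) :=
    List.Perm.append_right t (by decide)
  have hc : 2 ≤ c := by
    rcases cs with _ | ⟨d, ds⟩
    · have hlen : ([1,2,1,2,3,3] ++ t : List ℕ).length = n := by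
        rw [length_eq κ _ hcount, hκ]
      have hs := rl_sum (3 :: t)
      rw [hrl3] at hs
      simp at hs hlen
      omega
    · have := hrun c (by rw [hR1]; simp)
      omega
  refine ⟨c + 2, by omega,
    ⟨fun i => by rw [← hperm.count_eq i]; exact hcount i, (yam_transfer t).1 hyam, ?_⟩, ?_, ?_⟩
  · intro l hl
    rw [hR2] at hl
    rcases cs with _ | ⟨d, ds⟩
    · simp at hl; omega
    · simp at hl
      rcases hl with rfl | rfl | hl
      · omega
      · omega
      · exact hrun l (by rw [hR1]; simp [hl])
  · rw [hR2]; exact ⟨cs, rfl⟩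
  · obtain ⟨c', rfl⟩ : ∃ c', c = c' + 1 := ⟨c - 1, by omega⟩
    have hk : t.take c' = (List.range c').map (· + 4) := by
      apply key c' 0 t cs hrl3
      intro m i hi
      have e : ([1,2,3,1,2] : List ℕ) ++ (List.range (0+1)).map (· + 3) ++ t
          = [1,2,3,1,2,3] ++ t := by
        simp [List.range_succ]
      rw [e]
      exact (yam_transfer t).1 hyam m i hi
    refine ⟨t.drop c', ?_⟩
    rw [range_split (c' + 1 + 2) (by omega)]
    have e2 : c' + 1 + 2 - 3 = c' := by omega
    rw [e2, ← hk]
    simp [List.take_append_drop]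
  
lemma bwd (κ : ℕ →₀ ℕ) (z : ℕ) (hz : 4 ≤ z) (y' : List ℕ)
    (hm : MemYam κ y') (hrt : [3, z] <+: runLengths y')
    (h2 : ([1,2,3] ++ (List.range z).map (· + 1)) <+: y') :
    ∃ t, y' = [1,2,3,1,2,3] ++ t ∧ MemYam κ ([1,2,1,2,3,3] ++ t) := by
  obtain ⟨s, hs⟩ := h2
  rw [range_split z (by omega)] at hs
  refine ⟨(List.range (z-3)).map (· + 4) ++ s, ?_, ?_⟩
  · rw [← hs]; simp
  set t := (List.range (z-3)).map (· + 4) ++ s with ht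
  have hy' : y' = [1,2,3,1,2,3] ++ t := by rw [← hs]; simp [ht]
  obtain ⟨hcount, hyam, hrun⟩ := hm
  obtain ⟨c, cs, hrl3⟩ := rl_get t
  have hR1 : runLengths ([1,2,1,2,3,3] ++ t) = 2 :: 3 :: c :: cs := R1 hrl3
  have hR2 : runLengths ([1,2,3,1,2,3] ++ t) = 3 :: (c+2) :: cs := R2 hrl3
  have hzc : z = c + 2 := by
    obtain ⟨r, hr⟩ := hrt
    rw [hy', hR2] at hr
    simp at hr
    omega
  have hperm : ([1,2,1,2,3,3] ++ t : List ℕ).Perm ([1,2,3,1,2,3] ++ t) :=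
    List.Perm.append_right t (by decide)
  rw [hy'] at hcount hyam hrun
  refine ⟨fun i => by rw [hperm.count_eq i]; exact hcount i, (yam_transfer t).2 hyam, ?_⟩
  intro l hl
  rw [hR1] at hl
  rcases cs with _ | ⟨d, ds⟩
  · simp at hl; omega
  · simp at hl
    rcases hl with rfl | rfl | rfl | hl
    · omega
    · omega
    · omega
    · exact hrun l (by rw [hR2]; simp [hl])

/-- For `n ≥ 7` and any content `κ` with `Σᵢ κᵢ = n`, there is a bijection `ι` from
`𝒴(κ; (1,2,1,2,3,3))` onto the (disjoint) union over `z ≥ 4` of the sets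
`𝒴_{(3,z)}(κ; β_z)`, where `β_z = (1,2,3,1,2,…,z)`, decreasing the number of runs by one. -/
theorem exists_bijection_yam_121233 (n : ℕ) (κ : ℕ →₀ ℕ) (hn : 7 ≤ n)
    (hκ0 : κ 0 = 0) (hκ : κ.sum (fun _ m => m) = n) :
    ∃ ι : List ℕ → List ℕ,
      Set.InjOn ι (yamPre κ [1, 2, 1, 2, 3, 3]) ∧
      (∀ y ∈ yamPre κ [1, 2, 1, 2, 3, 3],
        (runLengths (ι y)).length + 1 = (runLengths y).length) ∧
      ι '' yamPre κ [1, 2, 1, 2, 3, 3]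
        = ⋃ z ∈ {z : ℕ | 4 ≤ z},
            (yamRT κ [3, z] ∩ yamPre κ ([1, 2, 3] ++ (List.range z).map (· + 1))) := by
  have hd : ∀ t : List ℕ, (([1,2,1,2,3,3] : List ℕ) ++ t).drop 6 = t := by
    intro t
    rw [show (6:ℕ) = ([1,2,1,2,3,3] : List ℕ).length from rfl, List.drop_left]
  refine ⟨fun y => [1,2,3,1,2,3] ++ y.drop 6, ?_, ?_, ?_⟩
  · rintro y1 ⟨_, ⟨t1, rfl⟩⟩ y2 ⟨_, ⟨t2, rfl⟩⟩ he
    simp only at he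
    rw [hd, hd] at he
    have : t1 = t2 := List.append_cancel_left he
    rw [this]
  · rintro y ⟨hm, ⟨t, rfl⟩⟩
    obtain ⟨c, cs, hrl3⟩ := rl_get t
    have hR1 : runLengths ([1,2,1,2,3,3] ++ t) = 2 :: 3 :: c :: cs := R1 hrl3
    have hR2 : runLengths ([1,2,3,1,2,3] ++ t) = 3 :: (c+2) :: cs := R2 hrl3
    simp only [hd]
    rw [hR1, hR2]
    simp
  · ext y'
    simp only [Set.mem_image, Set.mem_iUnion, Set.mem_setOf_eq, Set.mem_inter_iff,
      yamRT, yamPre]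
    constructor
    · rintro ⟨y, ⟨hm, ⟨t, rfl⟩⟩, rfl⟩
      rw [hd]
      obtain ⟨z, hz4, hm', hrt, hpre⟩ := fwd n κ hn hκ t hm
      exact ⟨z, hz4, ⟨hm', hrt⟩, ⟨hm', hpre⟩⟩
    · rintro ⟨z, hz4, ⟨hm', hrt⟩, ⟨_, hpre⟩⟩
      obtain ⟨t, rfl, hm0⟩ := bwd κ z hz4 _ hm' hrt hpre
      exact ⟨[1,2,1,2,3,3] ++ t, ⟨hm0, ⟨t, rfl⟩⟩, by rw [hd]⟩

end
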